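/- Disjoint ordered intervals from splitting: Start with a single integer interval [m, M] (m ≤ M). Repeatedly, any interval [lo, hi] in the current ordered list may be replaced (in place) by the two intervals [lo, spl], [spl+1, hi] where spl = lo + (hi - lo)/2, provided lo < hi; or shrunk to [lo, spl] or [spl+1, hi]. Then at every stage, the list of intervals I_1, ..., I_k is pairwise disjoint and ordered: max(I_j) < min(I_{j+1}) for all j, and every interval is a nonempty subinterval of [m, M]. -/

import Mathlib

/-- One rewriting step on an ordered list of integer intervals: an interval `[lo, hi]`
with `lo < hi` may be split in place into `[lo, spl], [spl+1, hi]` where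
`spl = lo + (hi - lo)/2`, or shrunk to either half. -/
inductive SplitStep : List (ℤ × ℤ) → List (ℤ × ℤ) → Prop
  | split (pre post : List (ℤ × ℤ)) (lo hi : ℤ) (h : lo < hi) :
      SplitStep (pre ++ (lo, hi) :: post)
        (pre ++ (lo, lo + (hi - lo) / 2) :: (lo + (hi - lo) / 2 + 1, hi) :: post)
  | shrinkL (pre post : List (ℤ × ℤ)) (lo hi : ℤ) (h : lo < hi) :
      SplitStep (pre ++ (lo, hi) :: post) (pre ++ (lo, lo + (hi - lo) / 2) :: post)
  | shrinkR (pre post : List (ℤ × ℤ)) (lo hi : ℤ) (h : lo < hi) :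
      SplitStep (pre ++ (lo, hi) :: post) (pre ++ (lo + (hi - lo) / 2 + 1, hi) :: post)

lemma preserve (m M : ℤ) (L L' : List (ℤ × ℤ))
    (hs : SplitStep L L')
    (hc : L.Chain' (fun p q => p.2 < q.1))
    (hm : ∀ p ∈ L, m ≤ p.1 ∧ p.1 ≤ p.2 ∧ p.2 ≤ M) :
    L'.Chain' (fun p q => p.2 < q.1) ∧
    ∀ p ∈ L', m ≤ p.1 ∧ p.1 ≤ p.2 ∧ p.2 ≤ M := by
  cases hs with
  | split pre post lo hi h =>
      simp only [List.Chain', List.isChain_append, List.isChain_cons, List.head?_cons, Option.mem_def,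
        Option.some.injEq, List.mem_append, List.mem_cons] at *
      obtain ⟨h1, ⟨h2, h3⟩, h4⟩ := hc
      refine ⟨⟨h1, ⟨?_, h2, h3⟩, ?_⟩, ?_⟩
      · rintro y rfl; simp
      · rintro x hx y rfl
        exact lt_of_lt_of_le (h4 x hx (lo, hi) rfl) (by simp)
      · intro p hp
        have := hm (lo, hi) (Or.inr (Or.inl rfl))
        rcases hp with hp | rfl | rfl | hp
        · exact hm p (Or.inl hp)
        · simp at this ⊢; omega
        · simp at this ⊢; omega
        · exact hm p (Or.inr (Or.inr hp))
  | shrinkL pre post lo hi h =>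
      simp only [List.Chain', List.isChain_append, List.isChain_cons, List.head?_cons, Option.mem_def,
        Option.some.injEq, List.mem_append, List.mem_cons] at *
      obtain ⟨h1, ⟨h2, h3⟩, h4⟩ := hc
      refine ⟨⟨h1, ⟨fun y hy => lt_trans (by omega) (h2 y hy), h3⟩, ?_⟩, ?_⟩
      · rintro x hx y rfl
        exact lt_of_lt_of_le (h4 x hx (lo, hi) rfl) (by simp)
      · intro p hp
        have := hm (lo, hi) (Or.inr (Or.inl rfl))
        rcases hp with hp | rfl | hp
        · exact hm p (Or.inl hp)
        · simp at this ⊢; omega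
        · exact hm p (Or.inr (Or.inr hp))
  | shrinkR pre post lo hi h =>
      simp only [List.Chain', List.isChain_append, List.isChain_cons, List.head?_cons, Option.mem_def,
        Option.some.injEq, List.mem_append, List.mem_cons] at *
      obtain ⟨h1, ⟨h2, h3⟩, h4⟩ := hc
      refine ⟨⟨h1, ⟨h2, h3⟩, ?_⟩, ?_⟩
      · rintro x hx y rfl
        have := h4 x hx (lo, hi) rfl; simp at this ⊢; omega
      · intro p hp
        have := hm (lo, hi) (Or.inr (Or.inl rfl))
        rcases hp with hp | rfl | hp
        · exact hm p (Or.inl hp)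
        · simp at this ⊢; omega
        · exact hm p (Or.inr (Or.inr hp))

/-- Disjoint ordered intervals from splitting: starting from the single interval
`[m, M]` with `m ≤ M`, at every stage of the splitting process the interval list is
pairwise disjoint and ordered (each max below the next min) and every interval is a
nonempty subinterval of `[m, M]`. -/
theorem split_intervals_ordered
    (m M : ℤ) (h : m ≤ M)
    (L : List (ℤ × ℤ))
    (hL : Relation.ReflTransGen SplitStep [(m, M)] L) :
    L.Chain' (fun p q => p.2 < q.1) ∧
    ∀ p ∈ L, m ≤ p.1 ∧ p.1 ≤ p.2 ∧ p.2 ≤ M := by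
  induction hL with
  | refl => simp [h, List.Chain']
  | tail _ hs ih => exact preserve m M _ _ hs ih.1 ih.2
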